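/- Let n ≥ 2 and let s ∈ [−1, 1/n). Then every finite set C ⊆ S^{n−1} with ⟨x,y⟩ ≤ s for all distinct x,y ∈ C has cardinality |C| ≤ 2n(1−s)/(1−ns). -/

import Mathlib

open scoped RealInnerProductSpace

/-- The second Levenshtein bound `L₂(n,s) = 2n(1-s)/(1-ns)` on the Euclidean sphere. -/
theorem levenshtein_second_bound_sphere
    (n : ℕ) (hn : 2 ≤ n) (s : ℝ) (hs : s ∈ Set.Ico (-1 : ℝ) (1 / n))
    (C : Finset (EuclideanSpace ℝ (Fin n)))
    (hC : (C : Set (EuclideanSpace ℝ (Fin n))) ⊆ Metric.sphere 0 1)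
    (hsep : ∀ x ∈ C, ∀ y ∈ C, x ≠ y → ⟪x, y⟫ ≤ s) :
    (C.card : ℝ) ≤ 2 * n * (1 - s) / (1 - n * s) := by
  classical
  have hn0 : (0:ℝ) < n := by positivity
  have hden : 0 < 1 - (n:ℝ) * s := by
    have := (lt_div_iff₀ hn0).mp hs.2
    linarith [mul_comm (n:ℝ) s]
  have hs1 : s < 1 := by
    have h1n : (1:ℝ)/n ≤ 1 := by
      rw [div_le_one hn0]; exact_mod_cast Nat.one_le_iff_ne_zero.mpr (by omega)
    linarith [hs.2]
  set M : ℝ := (C.card : ℝ) with hM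
  have hnorm : ∀ x ∈ C, ‖x‖ = 1 := by
    intro x hx
    simpa using hC hx
  have hinner_self : ∀ x ∈ C, ⟪x, x⟫ = 1 := by
    intro x hx
    rw [real_inner_self_eq_norm_sq, hnorm x hx]; norm_num
  have hinner : ∀ x y : EuclideanSpace ℝ (Fin n), ⟪x, y⟫ = ∑ i, x i * y i := by
    intro x y
    simp [PiLp.inner_apply, RCLike.inner_apply, conj_trivial]
    exact Finset.sum_congr rfl fun i _ => mul_comm _ _
  set A : Fin n → Fin n → ℝ := fun i j => ∑ x ∈ C, x i * x j with hA
  set T1 : ℝ := ∑ x ∈ C, ∑ y ∈ C, ⟪x, y⟫ with hT1def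
  set T2 : ℝ := ∑ x ∈ C, ∑ y ∈ C, ⟪x, y⟫ ^ 2 with hT2def
  have hT1 : 0 ≤ T1 := by
    have : T1 = ⟪∑ x ∈ C, x, ∑ y ∈ C, y⟫ := by
      rw [hT1def, sum_inner]
      exact Finset.sum_congr rfl fun x _ => (inner_sum _ _ _).symm
    rw [this]
    exact real_inner_self_nonneg
  have hT2eq : T2 = ∑ i, ∑ j, (A i j) ^ 2 := by
    have step1 : T2 = ∑ x ∈ C, ∑ y ∈ C, ∑ i, ∑ j, (x i * x j) * (y i * y j) := by
      refine Finset.sum_congr rfl fun x _ => Finset.sum_congr rfl fun y _ => ?_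
      rw [hinner, sq, Finset.sum_mul_sum]
      exact Finset.sum_congr rfl fun i _ => Finset.sum_congr rfl fun j _ => by ring
    rw [step1]
    rw [show (∑ x ∈ C, ∑ y ∈ C, ∑ i, ∑ j, (x i * x j) * (y i * y j))
        = ∑ x ∈ C, ∑ i, ∑ y ∈ C, ∑ j, (x i * x j) * (y i * y j) from
      Finset.sum_congr rfl fun x _ => Finset.sum_comm]
    rw [show (∑ x ∈ C, ∑ i, ∑ y ∈ C, ∑ j, (x i * x j) * (y i * y j))
        = ∑ x ∈ C, ∑ i, ∑ j, ∑ y ∈ C, (x i * x j) * (y i * y j) from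
      Finset.sum_congr rfl fun x _ => Finset.sum_congr rfl fun i _ => Finset.sum_comm]
    rw [Finset.sum_comm]
    refine Finset.sum_congr rfl fun i _ => ?_
    rw [Finset.sum_comm]
    refine Finset.sum_congr rfl fun j _ => ?_
    rw [sq, hA, Finset.sum_mul_sum]
  have htr : ∑ i, A i i = M := by
    have hdiag : ∀ x ∈ C, ∑ i, x i * x i = (1:ℝ) := fun x hx => by
      rw [← hinner x x, hinner_self x hx]
    calc ∑ i, A i i = ∑ x ∈ C, ∑ i, x i * x i := Finset.sum_comm
      _ = ∑ x ∈ C, (1:ℝ) := Finset.sum_congr rfl hdiag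
      _ = M := by simp [hM]
  have h1 : M ^ 2 ≤ (n:ℝ) * T2 := by
    have hcs : (∑ i, A i i) ^ 2 ≤ ((Finset.univ : Finset (Fin n)).card : ℝ) * ∑ i, (A i i) ^ 2 :=
      sq_sum_le_card_mul_sum_sq (s := Finset.univ) (f := fun i => A i i)
    have hle : ∑ i, (A i i) ^ 2 ≤ ∑ i, ∑ j, (A i j) ^ 2 :=
      Finset.sum_le_sum fun i _ =>
        Finset.single_le_sum (fun j _ => sq_nonneg (A i j)) (Finset.mem_univ i)
    rw [htr] at hcs
    rw [hT2eq]
    calc M ^ 2 ≤ ((Finset.univ : Finset (Fin n)).card : ℝ) * ∑ i, (A i i) ^ 2 := hcs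
      _ = (n:ℝ) * ∑ i, (A i i) ^ 2 := by simp
      _ ≤ (n:ℝ) * ∑ i, ∑ j, (A i j) ^ 2 := by
          exact mul_le_mul_of_nonneg_left hle (le_of_lt hn0)
  -- LP key bound
  have hKey : T2 + (1 - s) * T1 - s * (M * M) ≤ M * (2 * (1 - s)) := by
    have hperx : ∀ x ∈ C, ∑ y ∈ C, (⟪x, y⟫ + 1) * (⟪x, y⟫ - s) ≤ 2 * (1 - s) := by
      intro x hx
      have hle : ∑ y ∈ C, (⟪x, y⟫ + 1) * (⟪x, y⟫ - s)
          ≤ ∑ y ∈ C, (if y = x then 2 * (1 - s) else 0) := by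
        refine Finset.sum_le_sum fun y hy => ?_
        by_cases h : y = x
        · subst h
          rw [if_pos rfl, hinner_self y hy]
          ring_nf
          linarith
        · rw [if_neg h]
          have hub : ⟪x, y⟫ ≤ s := hsep x hx y hy (fun e => h e.symm)
          have hlb : -1 ≤ ⟪x, y⟫ := by
            have habs := abs_real_inner_le_norm x y
            rw [hnorm x hx, hnorm y hy] at habs
            have := (abs_le.mp (by linarith : |⟪x, y⟫| ≤ 1)).1
            linarith
          have h1 : 0 ≤ ⟪x, y⟫ + 1 := by linarith
          have h2 : ⟪x, y⟫ - s ≤ 0 := by linarith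
          exact mul_nonpos_of_nonneg_of_nonpos h1 h2
      calc ∑ y ∈ C, (⟪x, y⟫ + 1) * (⟪x, y⟫ - s) ≤ _ := hle
        _ = 2 * (1 - s) := by rw [Finset.sum_ite_eq' C x (fun _ => 2 * (1 - s)), if_pos hx]
    have hsum : ∑ x ∈ C, ∑ y ∈ C, (⟪x, y⟫ + 1) * (⟪x, y⟫ - s) ≤ M * (2 * (1 - s)) := by
      calc ∑ x ∈ C, ∑ y ∈ C, (⟪x, y⟫ + 1) * (⟪x, y⟫ - s)
          ≤ ∑ _x ∈ C, 2 * (1 - s) := Finset.sum_le_sum hperx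
        _ = M * (2 * (1 - s)) := by rw [Finset.sum_const, nsmul_eq_mul]
    have e1 : ∀ x ∈ C, ∑ y ∈ C, (⟪x, y⟫ + 1) * (⟪x, y⟫ - s)
        = (∑ y ∈ C, ⟪x, y⟫ ^ 2) + (1 - s) * (∑ y ∈ C, ⟪x, y⟫) - s * M := by
      intro x _
      calc ∑ y ∈ C, (⟪x, y⟫ + 1) * (⟪x, y⟫ - s)
          = ∑ y ∈ C, (⟪x, y⟫ ^ 2 + (1 - s) * ⟪x, y⟫ - s) :=
            Finset.sum_congr rfl fun y _ => by ring
        _ = _ := by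
            rw [Finset.sum_sub_distrib, Finset.sum_add_distrib, ← Finset.mul_sum,
              Finset.sum_const, nsmul_eq_mul, hM]
            ring
    have hexp : ∑ x ∈ C, ∑ y ∈ C, (⟪x, y⟫ + 1) * (⟪x, y⟫ - s)
        = T2 + (1 - s) * T1 - s * (M * M) := by
      rw [hT2def, hT1def]
      calc ∑ x ∈ C, ∑ y ∈ C, (⟪x, y⟫ + 1) * (⟪x, y⟫ - s)
          = ∑ x ∈ C, ((∑ y ∈ C, ⟪x, y⟫ ^ 2) + (1 - s) * (∑ y ∈ C, ⟪x, y⟫) - s * M) :=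
            Finset.sum_congr rfl e1
        _ = (∑ x ∈ C, ∑ y ∈ C, ⟪x, y⟫ ^ 2)
            + (1 - s) * (∑ x ∈ C, ∑ y ∈ C, ⟪x, y⟫) - s * (M * M) := by
            rw [Finset.sum_sub_distrib, Finset.sum_add_distrib, ← Finset.mul_sum,
              Finset.sum_const, nsmul_eq_mul, hM]
            ring
    linarith [hexp ▸ hsum]
  -- conclude
  rw [le_div_iff₀ hden]
  rcases eq_or_lt_of_le (Nat.cast_nonneg C.card : (0:ℝ) ≤ M) with h0 | hMpos
  · have hMz : M = 0 := by rw [hM, ← h0]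
    rw [hMz]
    have : 0 ≤ 2 * (n:ℝ) * (1 - s) := by nlinarith
    linarith
  · have hM2 : M * M * (1 - (n:ℝ) * s) ≤ 2 * (n:ℝ) * M * (1 - s) := by
      have hKn := mul_le_mul_of_nonneg_left hKey hn0.le
      have hT1n : 0 ≤ (n:ℝ) * ((1 - s) * T1) :=
        mul_nonneg hn0.le (mul_nonneg (by linarith) hT1)
      nlinarith [h1]
    nlinarith [hMpos, hM2]
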